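/- Let $X \in \mathbb{R}^{n\times p}$ with $X^T X = I_p$, $E \in \mathbb{R}^{n\times p}$ with $X^T E$ skew-symmetric, $W = -(I_n - XX^T)E$, $J(\tau) = I_p + \frac{\tau^2}{4}W^T W + \frac{\tau}{2}X^T E$, and $Y(\tau) = (2X + \tau W)J(\tau)^{-1} - X$. Then $Y(0) = X$ and $Y'(0) = -E$. -/

import Mathlib

open Matrix

attribute [local instance] Matrix.linftyOpNormedRing Matrix.linftyOpNormedAlgebra

/-- The curve `Y(τ) = (2X + τW) J(τ)⁻¹ - X` satisfies `Y(0) = X` and `Y'(0) = -E`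
(entrywise derivatives). -/
theorem stmt_10 (n p : ℕ) (X E : Matrix (Fin n) (Fin p) ℝ)
    (hX : Xᵀ * X = 1) (hskew : (Xᵀ * E)ᵀ = -(Xᵀ * E))
    (W : Matrix (Fin n) (Fin p) ℝ) (hW : W = -((1 - X * Xᵀ) * E))
    (J : ℝ → Matrix (Fin p) (Fin p) ℝ)
    (hJ : ∀ τ : ℝ, J τ = 1 + (τ ^ 2 / 4) • (Wᵀ * W) + (τ / 2) • (Xᵀ * E))
    (Y : ℝ → Matrix (Fin n) (Fin p) ℝ)
    (hY : ∀ τ : ℝ, Y τ = ((2 : ℝ) • X + τ • W) * (J τ)⁻¹ - X) :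
    Y 0 = X ∧ ∀ i j, HasDerivAt (fun τ => Y τ i j) (-(E i j)) 0 := by
  have hJ0 : J 0 = 1 := by simp [hJ]
  have hinv0 : (J 0)⁻¹ = 1 := by rw [hJ0, inv_one]
  constructor
  · rw [hY, hinv0]; simp [two_smul]
  set S : Matrix (Fin p) (Fin p) ℝ := Xᵀ * E with hS
  set A : Matrix (Fin p) (Fin p) ℝ := Wᵀ * W with hA
  -- derivative of J at 0, as a matrix-valued function
  have hJd : HasDerivAt J ((1 / 2 : ℝ) • S) 0 := by
    have h1 : HasDerivAt (fun τ : ℝ => τ ^ 2 / 4) 0 0 := by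
      simpa using (hasDerivAt_pow 2 (0 : ℝ)).div_const 4
    have h2 : HasDerivAt (fun τ : ℝ => τ / 2) (1 / 2) 0 := by
      simpa using (hasDerivAt_id (0 : ℝ)).div_const 2
    have := ((h1.smul_const A).const_add (1 : Matrix (Fin p) (Fin p) ℝ)).add
      (h2.smul_const S)
    simp only [Pi.add_def] at this
    rw [funext fun τ => hJ τ]
    convert this using 1
    · rfl
    · rfl
    · rfl
    · simp
  -- derivative of τ ↦ (J τ)⁻¹ at 0
  have hinvd : HasDerivAt (fun τ => (J τ)⁻¹) (-((1 / 2 : ℝ) • S)) 0 := by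
    have hf := hasFDerivAt_ringInverse (𝕜 := ℝ) (R := Matrix (Fin p) (Fin p) ℝ) 1
    rw [Units.val_one, ← hJ0] at hf
    have hcomp := hf.comp_hasDerivAt 0 hJd
    rw [show Ring.inverse ∘ J = fun τ => (J τ)⁻¹ from
      funext fun τ => (Matrix.nonsing_inv_eq_ringInverse _).symm] at hcomp
    simp at hcomp
    convert hcomp using 1
    · rfl
    · rfl
    · rfl
    · norm_num
  -- entrywise derivative of the inverse
  have hinvde : ∀ k j, HasDerivAt (fun τ => (J τ)⁻¹ k j)
      ((-((1 / 2 : ℝ) • S)) k j) 0 := by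
    intro k j
    let e : Matrix (Fin p) (Fin p) ℝ →ₗ[ℝ] ℝ :=
      { toFun := fun M => M k j
        map_add' := fun M N => rfl
        map_smul' := fun c M => rfl }
    have := (LinearMap.toContinuousLinearMap e).hasFDerivAt.comp_hasDerivAt 0 hinvd
    exact this
  intro i j
  have key : ∀ τ, Y τ i j =
      (∑ k, ((2 : ℝ) • X + τ • W) i k * (J τ)⁻¹ k j) - X i j := by
    intro τ; rw [hY]; simp [Matrix.sub_apply, Matrix.mul_apply]
  have hsum : HasDerivAt (fun τ => ∑ k, ((2 : ℝ) • X + τ • W) i k * (J τ)⁻¹ k j)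
      (∑ k, (W i k * (J 0)⁻¹ k j +
        ((2 : ℝ) • X + (0 : ℝ) • W) i k * (-((1 / 2 : ℝ) • S)) k j)) 0 := by
    apply HasDerivAt.fun_sum
    intro k _
    have h1 : HasDerivAt (fun τ : ℝ => ((2 : ℝ) • X + τ • W) i k) (W i k) 0 := by
      simp only [Matrix.add_apply, Matrix.smul_apply, smul_eq_mul]
      simpa using ((hasDerivAt_id (0 : ℝ)).mul_const (W i k)).const_add ((2:ℝ) * X i k)
    exact h1.mul (hinvde k j)
  have hmat : W * (1 : Matrix (Fin p) (Fin p) ℝ) + ((2 : ℝ) • X) * (-((1 / 2 : ℝ) • S)) = -E := by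
    rw [Matrix.mul_one, hS, hW, Matrix.mul_neg, Matrix.smul_mul, Matrix.mul_smul, smul_smul]
    norm_num
    rw [Matrix.sub_mul, Matrix.one_mul, Matrix.mul_assoc]
    abel
  have hfinal : (∑ k, (W i k * (J 0)⁻¹ k j +
      ((2 : ℝ) • X + (0 : ℝ) • W) i k * (-((1 / 2 : ℝ) • S)) k j)) = -(E i j) := by
    have h2 : (∑ k, (W i k * (J 0)⁻¹ k j +
        ((2 : ℝ) • X + (0 : ℝ) • W) i k * (-((1 / 2 : ℝ) • S)) k j))
        = (W * (J 0)⁻¹ + ((2 : ℝ) • X) * (-((1 / 2 : ℝ) • S))) i j := by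
      simp [Matrix.add_apply, Matrix.mul_apply, Finset.sum_add_distrib]
      exact Finset.sum_congr rfl fun k _ => by ring
    rw [h2, hinv0, hmat]
    simp
  have hd : HasDerivAt (fun τ => (∑ k, ((2 : ℝ) • X + τ • W) i k * (J τ)⁻¹ k j) - X i j)
      (-(E i j)) 0 := by
    rw [← hfinal]; exact hsum.sub_const _
  exact hd.congr_of_eventuallyEq (Filter.Eventually.of_forall fun τ => key τ)
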